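/- arXiv:0801.1522 — 5 statements merged into one kernel-verified Lean document; each statement's English description precedes it below -/
import Mathlib

section
/- For every integer k ≥ 1, the series S_k := ∑_{j ≥ 1, j and k of opposite parity} (1/(j-k)² + 1/(j+k)²) converges and equals π²/4 - 1/k² when k is odd, and π²/4 when k is even. -/
open Real

private noncomputable def oddg : ℕ → ℝ := fun m => if Odd m then 1 / (m : ℝ) ^ 2 else 0

private lemma oddg_hasSum : HasSum oddg (π ^ 2 / 8) := by
  have h2 : HasSum (fun n : ℕ => (1 : ℝ) / (n : ℝ) ^ 2) (π ^ 2 / 6) := hasSum_zeta_two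
  have hinj : Function.Injective (fun n : ℕ => 2 * n) := fun a b h => by
    simp only [] at h; omega
  have hev : HasSum (fun m : ℕ => if Even m then 1 / (m : ℝ) ^ 2 else 0) (π ^ 2 / 24) := by
    have hvan : ∀ m ∉ Set.range (fun n : ℕ => 2 * n),
        (if Even m then 1 / (m : ℝ) ^ 2 else 0) = 0 := by
      intro m hm
      have : ¬ Even m := by
        rintro ⟨r, hr⟩
        exact hm ⟨r, by simp only []; omega⟩
      simp [this]
    rw [← Function.Injective.hasSum_iff hinj hvan]
    have heq : ((fun m : ℕ => if Even m then 1 / (m : ℝ) ^ 2 else 0) ∘ (fun n : ℕ => 2 * n))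
        = fun n : ℕ => (1 / 4) * (1 / (n : ℝ) ^ 2) := by
      funext n
      simp only [Function.comp_apply, if_pos (even_two_mul n)]
      rcases Nat.eq_zero_or_pos n with h | h
      · simp [h]
      · have : (n : ℝ) ≠ 0 := Nat.cast_ne_zero.2 (by omega)
        push_cast
        field_simp
        ring
    rw [heq, show (π ^ 2 / 24 : ℝ) = 1 / 4 * (π ^ 2 / 6) by ring]
    exact h2.mul_left (1 / 4)
  have := h2.sub hev
  have heq : (fun m : ℕ => 1 / (m : ℝ) ^ 2 - if Even m then 1 / (m : ℝ) ^ 2 else 0) = oddg := by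
    funext m
    rcases Nat.even_or_odd m with h | h
    · simp [oddg, h, Nat.not_odd_iff_even.2 h]
    · simp [oddg, h, Nat.not_even_iff_odd.2 h]
  rw [heq] at this
  rw [show (π ^ 2 / 8 : ℝ) = π ^ 2 / 6 - π ^ 2 / 24 by ring]
  exact this

/-- For `k ≥ 1`, the sum over positive integers `j` of parity opposite to `k`
(i.e. `j + k` is odd) of `1/(j-k)² + 1/(j+k)²` equals `π²/4 - 1/k²` for odd `k`
and `π²/4` for even `k`. -/
theorem stmt5 (k : ℕ) (hk : 1 ≤ k) :
    HasSum
      (fun j : {j : ℕ // 1 ≤ j ∧ Odd (j + k)} =>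
        1 / ((j : ℕ) - (k : ℝ)) ^ 2 + 1 / ((j : ℕ) + (k : ℝ)) ^ 2)
      (if Odd k then Real.pi ^ 2 / 4 - 1 / (k : ℝ) ^ 2 else Real.pi ^ 2 / 4) := by
  classical
  set g := oddg with hgdef
  have hgsum : HasSum g (π ^ 2 / 8) := oddg_hasSum
  have hg0 : g 0 = 0 := by simp [hgdef, oddg]
  -- the B part: sum of 1/(j+k)^2
  set FB : ℕ → ℝ := fun j => if 1 ≤ j ∧ Odd (j + k) then 1 / ((j : ℝ) + (k : ℝ)) ^ 2 else 0
    with hFB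
  set G := ∑ i ∈ Finset.range (k + 1), g i with hG
  have hBshift : HasSum (fun n => g (n + (k + 1))) (π ^ 2 / 8 - G) :=
    (hasSum_nat_add_iff' (k + 1)).2 hgsum
  have hBeq : (fun n => FB (n + 1)) = fun n => g (n + (k + 1)) := by
    funext n
    simp only [hFB, hgdef, oddg]
    have h1 : (1 ≤ n + 1 ∧ Odd (n + 1 + k)) ↔ Odd (n + (k + 1)) := by
      rw [Nat.odd_iff, Nat.odd_iff]; omega
    have h2 : ((n + 1 : ℕ) : ℝ) + (k : ℝ) = ((n + (k + 1) : ℕ) : ℝ) := by push_cast; ring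
    by_cases h : Odd (n + (k + 1))
    · rw [if_pos (h1.2 h), if_pos h, h2]
    · rw [if_neg (fun hc => h (h1.1 hc)), if_neg h]
  have hB : HasSum FB (π ^ 2 / 8 - G) := by
    have := hBshift
    rw [← hBeq] at this
    have h := (hasSum_nat_add_iff 1).1 this
    have hFB0 : FB 0 = 0 := by simp [hFB]
    rwa [Finset.sum_range_one, hFB0, add_zero] at h
  -- the A part: sum of 1/(j-k)^2
  set FA : ℕ → ℝ := fun j => if 1 ≤ j ∧ Odd (j + k) then 1 / ((j : ℝ) - (k : ℝ)) ^ 2 else 0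
    with hFA
  set FA1 : ℕ → ℝ := fun j => if k < j then g (j - k) else 0 with hFA1
  set FA2 : ℕ → ℝ := fun j => if j ≤ k then FA j else 0 with hFA2
  have hsplit : FA = fun j => FA1 j + FA2 j := by
    funext j
    rcases le_or_gt j k with h | h
    · simp only [hFA1, hFA2, if_neg (not_lt.2 h), if_pos h, zero_add]
    · simp only [hFA1, hFA2, if_pos h, if_neg (not_le.2 h), add_zero, hFA, hgdef, oddg]
      have h1 : (1 ≤ j ∧ Odd (j + k)) ↔ Odd (j - k) := by
        rw [Nat.odd_iff, Nat.odd_iff]; omega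
      have h2 : (j : ℝ) - (k : ℝ) = ((j - k : ℕ) : ℝ) := by
        rw [Nat.cast_sub h.le]
      by_cases ho : Odd (j - k)
      · rw [if_pos (h1.2 ho), if_pos ho, h2]
      · rw [if_neg (fun hc => ho (h1.1 hc)), if_neg ho]
  have hA1shift : (fun n => FA1 (n + (k + 1))) = fun n => g (n + 1) := by
    funext n
    simp only [hFA1, if_pos (by omega : k < n + (k + 1))]
    congr 1
    omega
  have hgs1 : HasSum (fun n => g (n + 1)) (π ^ 2 / 8) := by
    have := (hasSum_nat_add_iff' 1).2 hgsum
    simpa [hg0] using this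
  have hA1 : HasSum FA1 (π ^ 2 / 8) := by
    have := hgs1
    rw [← hA1shift] at this
    have h := (hasSum_nat_add_iff (k + 1)).1 this
    have hz : ∑ i ∈ Finset.range (k + 1), FA1 i = 0 := by
      apply Finset.sum_eq_zero
      intro i hi
      simp only [Finset.mem_range] at hi
      simp [hFA1, Nat.not_lt.2 (by omega : i ≤ k)]
    rwa [hz, add_zero] at h
  set F2 := ∑ j ∈ Finset.range (k + 1), FA2 j with hF2
  have hA2 : HasSum FA2 F2 := by
    apply hasSum_sum_of_ne_finset_zero
    intro j hj
    simp only [Finset.mem_range] at hj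
    simp only [hFA2]
    rw [if_neg (by omega : ¬ j ≤ k)]
  have hA : HasSum FA (π ^ 2 / 8 + F2) := by
    rw [hsplit]; exact hA1.add hA2
  -- compute F2 = G - g k
  have hF2val : F2 = G - g k := by
    have e1 : F2 = ∑ i ∈ Finset.range k, FA (i + 1) := by
      rw [hF2, Finset.sum_range_succ']
      have h0 : FA2 0 = 0 := by simp [hFA2, hFA]
      rw [h0, add_zero]
      apply Finset.sum_congr rfl
      intro i hi
      simp only [Finset.mem_range] at hi
      simp only [hFA2]
      rw [if_pos (by omega : i + 1 ≤ k)]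
    have e2 : ∀ i < k, FA (i + 1) = g (k - 1 - i) := by
      intro i hi
      simp only [hFA, hgdef, oddg]
      have h1 : (1 ≤ i + 1 ∧ Odd (i + 1 + k)) ↔ Odd (k - 1 - i) := by
        rw [Nat.odd_iff, Nat.odd_iff]; omega
      have h2 : 1 / (((i + 1 : ℕ) : ℝ) - (k : ℝ)) ^ 2 = 1 / (((k - 1 - i : ℕ) : ℝ)) ^ 2 := by
        have : ((k - 1 - i : ℕ) : ℝ) = (k : ℝ) - ((i + 1 : ℕ) : ℝ) := by
          rw [Nat.cast_sub (by omega), Nat.cast_sub (by omega)]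
          push_cast; ring
        rw [this, ← neg_sub ((i + 1 : ℕ) : ℝ), neg_pow, ← neg_sub ((k:ℝ))]
        ring_nf
      by_cases ho : Odd (k - 1 - i)
      · rw [if_pos (h1.2 ho), if_pos ho, h2]
      · rw [if_neg (fun hc => ho (h1.1 hc)), if_neg ho]
    have e3 : ∑ i ∈ Finset.range k, FA (i + 1) = ∑ i ∈ Finset.range k, g (k - 1 - i) :=
      Finset.sum_congr rfl fun i hi => e2 i (Finset.mem_range.1 hi)
    rw [e1, e3, Finset.sum_range_reflect, hG, Finset.sum_range_succ]
    ring
  -- total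
  have htot : HasSum (fun j : ℕ => FA j + FB j) (π ^ 2 / 4 - g k) := by
    have := hA.add hB
    convert this using 1
    rw [hF2val]; ring
  -- transfer to the subtype
  have hsub : HasSum
      (fun j : {j : ℕ // 1 ≤ j ∧ Odd (j + k)} =>
        1 / ((j : ℕ) - (k : ℝ)) ^ 2 + 1 / ((j : ℕ) + (k : ℝ)) ^ 2) (π ^ 2 / 4 - g k) := by
    have hind : HasSum (Set.indicator {j : ℕ | 1 ≤ j ∧ Odd (j + k)}
        (fun j : ℕ => 1 / ((j : ℝ) - (k : ℝ)) ^ 2 + 1 / ((j : ℝ) + (k : ℝ)) ^ 2))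
        (π ^ 2 / 4 - g k) := by
      have heq : Set.indicator {j : ℕ | 1 ≤ j ∧ Odd (j + k)}
          (fun j : ℕ => 1 / ((j : ℝ) - (k : ℝ)) ^ 2 + 1 / ((j : ℝ) + (k : ℝ)) ^ 2)
          = fun j : ℕ => FA j + FB j := by
        funext j
        simp only [Set.indicator_apply, Set.mem_setOf_eq, hFA, hFB]
        by_cases h : 1 ≤ j ∧ Odd (j + k)
        · simp [h]
        · simp [h]
      rw [heq]
      exact htot
    exact hasSum_subtype_iff_indicator.2 hind
  have hgk : g k = if Odd k then 1 / (k : ℝ) ^ 2 else 0 := rfl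
  by_cases ho : Odd k
  · rw [if_pos ho]
    have : π ^ 2 / 4 - g k = π ^ 2 / 4 - 1 / (k : ℝ) ^ 2 := by rw [hgk, if_pos ho]
    rwa [this] at hsub
  · rw [if_neg ho]
    have : π ^ 2 / 4 - g k = π ^ 2 / 4 := by rw [hgk, if_neg ho]; ring
    rwa [this] at hsub
end

section
/- For every integer k ≥ 1, the series S_k := ∑_{j ≥ 1, j and k of opposite parity} (1/(j-k)⁴ + 1/(j+k)⁴) converges and equals π⁴/48 - 1/k⁴ when k is odd, and π⁴/48 when k is even. -/
open Real Finset

private lemma base96 : HasSum (fun n : ℕ => 1 / (2 * (n : ℝ) + 1) ^ 4) (π ^ 4 / 96) := by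
  have hfull := hasSum_zeta_four
  have heven : HasSum (fun n : ℕ => (1 : ℝ) / ((2 * n : ℕ) : ℝ) ^ 4) (π ^ 4 / 1440) := by
    have h := hfull.mul_left (16⁻¹ : ℝ)
    have hfe : (fun n : ℕ => (16⁻¹ : ℝ) * (1 / (n : ℝ) ^ 4))
        = fun n : ℕ => (1 : ℝ) / ((2 * n : ℕ) : ℝ) ^ 4 := by
      funext n; push_cast; ring
    rw [hfe] at h
    have : (16⁻¹ : ℝ) * (π ^ 4 / 90) = π ^ 4 / 1440 := by ring
    rwa [this] at h
  have hinj : Function.Injective (fun n : ℕ => 2 * n + 1) := fun a b h => by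
    dsimp only at h; omega
  have hodds : Summable (fun n : ℕ => (1 : ℝ) / ((2 * n + 1 : ℕ) : ℝ) ^ 4) :=
    hfull.summable.comp_injective (i := fun n : ℕ => 2 * n + 1) hinj
  obtain ⟨b, hb⟩ := hodds
  have huniq :=
    ((HasSum.even_add_odd (f := fun n : ℕ => (1 : ℝ) / (n : ℝ) ^ 4) heven hb)).unique hfull
  have hbval : b = π ^ 4 / 96 := by linarith
  rw [hbval] at hb
  have hfe : (fun n : ℕ => (1 : ℝ) / ((2 * n + 1 : ℕ) : ℝ) ^ 4)
      = fun n : ℕ => 1 / (2 * (n : ℝ) + 1) ^ 4 := by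
    funext n; push_cast; ring
  rwa [hfe] at hb

private lemma piece2 (N : ℕ) :
    HasSum (fun n : ℕ => 1 / (2 * ((n : ℝ) + N) + 1) ^ 4)
      (π ^ 4 / 96 - ∑ i ∈ range N, 1 / (2 * (i : ℝ) + 1) ^ 4) := by
  have h := (hasSum_nat_add_iff' (f := fun n : ℕ => 1 / (2 * (n : ℝ) + 1) ^ 4)
    (g := π ^ 4 / 96) N).mpr base96
  have hfe : (fun n : ℕ => 1 / (2 * ((n + N : ℕ) : ℝ) + 1) ^ 4)
      = fun n : ℕ => 1 / (2 * ((n : ℝ) + N) + 1) ^ 4 := by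
    funext n; push_cast; ring
  rwa [hfe] at h

private lemma piece1 (a : ℕ) :
    HasSum (fun n : ℕ => 1 / (2 * (n : ℝ) + 1 - 2 * a) ^ 4)
      (π ^ 4 / 96 + ∑ i ∈ range a, 1 / (2 * (i : ℝ) + 1) ^ 4) := by
  set f : ℕ → ℝ := fun n => 1 / (2 * (n : ℝ) + 1 - 2 * a) ^ 4 with hf
  have key : HasSum (fun n : ℕ => f (n + a)) (π ^ 4 / 96) := by
    have hfe : (fun n : ℕ => f (n + a)) = fun n : ℕ => 1 / (2 * (n : ℝ) + 1) ^ 4 := by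
      funext n; simp only [hf]; push_cast; ring
    rw [hfe]; exact base96
  have h := (hasSum_nat_add_iff (f := f) a).mp key
  have hsum : ∑ i ∈ range a, f i = ∑ i ∈ range a, 1 / (2 * (i : ℝ) + 1) ^ 4 := by
    rw [← Finset.sum_range_reflect (fun i => 1 / (2 * (i : ℝ) + 1) ^ 4) a]
    refine Finset.sum_congr rfl fun i hi => ?_
    rw [Finset.mem_range] at hi
    have h1 : ((a - 1 - i : ℕ) : ℝ) = (a : ℝ) - 1 - i := by
      have h2 : a - 1 - i = a - (1 + i) := by omega
      rw [h2, Nat.cast_sub (by omega)]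
      push_cast; ring
    simp only [hf, h1]
    ring
  rwa [hsum] at h

private def eAux (k : ℕ) : ℕ ≃ {j : ℕ // 1 ≤ j ∧ Odd (j + k)} where
  toFun n := ⟨2 * n + 1 + k % 2, by omega, by rw [Nat.odd_iff]; omega⟩
  invFun j := ((j : ℕ) - 1 - k % 2) / 2
  left_inv n := by simp only; omega
  right_inv j := by
    have h2 := j.2.2
    rw [Nat.odd_iff] at h2
    exact Subtype.ext (by simp only; omega)

theorem stmt6 (k : ℕ) (hk : 1 ≤ k) :
    HasSum
      (fun j : {j : ℕ // 1 ≤ j ∧ Odd (j + k)} =>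
        1 / ((j : ℕ) - (k : ℝ)) ^ 4 + 1 / ((j : ℕ) + (k : ℝ)) ^ 4)
      (if Odd k then Real.pi ^ 4 / 48 - 1 / (k : ℝ) ^ 4 else Real.pi ^ 4 / 48) := by
  rw [← (eAux k).hasSum_iff]
  rcases Nat.even_or_odd k with hke | hko
  · -- k even
    obtain ⟨a, ha⟩ := hke
    subst ha
    have hm : (a + a) % 2 = 0 := by omega
    rw [if_neg (by rw [Nat.odd_iff]; omega)]
    have hs := (piece1 a).add (piece2 a)
    have hval : π ^ 4 / 96 + (∑ i ∈ range a, 1 / (2 * (i : ℝ) + 1) ^ 4) +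
        (π ^ 4 / 96 - ∑ i ∈ range a, 1 / (2 * (i : ℝ) + 1) ^ 4) = π ^ 4 / 48 := by ring
    rw [hval] at hs
    convert hs using 2 with n
    simp only [Function.comp_apply, eAux, Equiv.coe_fn_mk, hm, add_zero]
    push_cast
    ring
  · -- k odd
    obtain ⟨a, ha⟩ := hko
    subst ha
    have hm : (2 * a + 1) % 2 = 1 := by omega
    rw [if_pos ⟨a, rfl⟩]
    have hs := (piece1 a).add (piece2 (a + 1))
    have hval : π ^ 4 / 96 + (∑ i ∈ range a, 1 / (2 * (i : ℝ) + 1) ^ 4) +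
        (π ^ 4 / 96 - ∑ i ∈ range (a + 1), 1 / (2 * (i : ℝ) + 1) ^ 4)
        = π ^ 4 / 48 - 1 / ((2 * a + 1 : ℕ) : ℝ) ^ 4 := by
      rw [Finset.sum_range_succ]
      push_cast
      ring
    rw [hval] at hs
    convert hs using 2 with n
    simp only [Function.comp_apply, eAux, Equiv.coe_fn_mk, hm]
    push_cast
    ring
end

section
/- For every odd integer a ∈ {1, 3, 5} and every integer k ≥ 1, the series S_k^a := ∑_{j ≥ 1, j and k of opposite parity} (1/(j-k)^a - 1/(j+k)^a) converges and equals 1/k^a when k is odd and 0 when k is even. -/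
open Real Filter Finset Topology

lemma aux_hasSum (a k c : ℕ) (ha : a = 1 ∨ a = 3 ∨ a = 5) (hk : 1 ≤ k) (hc : 1 ≤ c) :
    HasSum (fun n : ℕ => 1/(2*(n:ℝ)+c-k)^a - 1/(2*(n:ℝ)+c+k)^a)
      (∑ n ∈ Finset.range k, 1/(2*(n:ℝ)+c-k)^a) := by
  have ha1 : 1 ≤ a := by rcases ha with h|h|h <;> omega
  have hkR : (1:ℝ) ≤ k := by exact_mod_cast hk
  have hcR : (1:ℝ) ≤ c := by exact_mod_cast hc
  set h : ℕ → ℝ := fun n => 1/(2*(n:ℝ)+c-k)^a with hh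
  have hgk : ∀ n : ℕ, 1/(2*(n:ℝ)+c-k)^a - 1/(2*(n:ℝ)+c+k)^a = h n - h (n+k) := by
    intro n
    have : (2*((n+k:ℕ):ℝ)+c-k) = 2*(n:ℝ)+c+k := by push_cast; ring
    simp only [hh, this]
  -- summability
  have hb : Summable (fun n : ℕ => (2*(k:ℝ)+1)/((n:ℝ)+1)^2) := by
    have h1 : Summable (fun n : ℕ => 1/((n:ℝ)+1)^2) := by
      have := (summable_nat_add_iff 1).2
        ((Real.summable_one_div_nat_pow (p := 2)).2 one_lt_two)
      refine this.congr fun n => ?_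
      push_cast; ring
    simpa [div_eq_mul_inv, mul_comm] using h1.mul_left (2*(k:ℝ)+1)
  have hsum : Summable (fun n : ℕ => h n - h (n+k)) := by
    rw [← summable_nat_add_iff k]
    refine hb.of_nonneg_of_le ?_ ?_ <;> intro n <;>
      set x : ℝ := 2*((n+k:ℕ):ℝ)+c-k with hx <;>
      set y : ℝ := 2*((n+k+k:ℕ):ℝ)+c-k with hy <;>
      have hnR : (0:ℝ) ≤ n := Nat.cast_nonneg n <;>
      have hxval : x = 2*(n:ℝ) + k + c := by rw [hx]; push_cast; ring
    all_goals have hyval : y = 2*(n:ℝ) + 3*k + c := by rw [hy]; push_cast; ring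
    all_goals have hx1 : (n:ℝ)+1 ≤ x := by rw [hxval]; linarith
    all_goals have hy1 : (n:ℝ)+1 ≤ y := by rw [hyval]; linarith
    all_goals have hxy : x ≤ y := by rw [hxval, hyval]; linarith
    all_goals have hxpos : (0:ℝ) < x := by linarith
    all_goals have hypos : (0:ℝ) < y := by linarith
    all_goals have hnpos : (0:ℝ) < (n:ℝ)+1 := by linarith
    · -- nonneg
      simp only [hh, ← hx, ← hy]
      rw [sub_nonneg]
      exact one_div_le_one_div_of_le (pow_pos hxpos a) (pow_le_pow_left₀ hxpos.le hxy a)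
    · -- upper bound
      show h (n+k) - h (n+k+k) ≤ (2*(k:ℝ)+1)/((n:ℝ)+1)^2
      simp only [hh, ← hx, ← hy]
      have hlast : 1/((n:ℝ)+1)^2 ≤ (2*(k:ℝ)+1)/((n:ℝ)+1)^2 :=
        div_le_div₀ (by linarith) (by linarith) (by positivity) le_rfl
      rcases ha with rfl|rfl|rfl
      · have key : 1/x^1 - 1/y^1 = 2*(k:ℝ)/(x*y) := by
          rw [pow_one, pow_one]
          field_simp
          rw [hxval, hyval]; ring
        rw [key]
        apply div_le_div₀ (by linarith) (by linarith) (by positivity)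
        nlinarith
      · have hylb : (0:ℝ) < 1/y^3 := by positivity
        have hxub : 1/x^3 ≤ 1/((n:ℝ)+1)^2 := by
          apply one_div_le_one_div_of_le (by positivity)
          calc ((n:ℝ)+1)^2 ≤ x^2 := by nlinarith
            _ ≤ x^3 := pow_le_pow_right₀ (by linarith) (by norm_num)
        linarith
      · have hylb : (0:ℝ) < 1/y^5 := by positivity
        have hxub : 1/x^5 ≤ 1/((n:ℝ)+1)^2 := by
          apply one_div_le_one_div_of_le (by positivity)
          calc ((n:ℝ)+1)^2 ≤ x^2 := by nlinarith
            _ ≤ x^5 := pow_le_pow_right₀ (by linarith) (by norm_num)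
        linarith
  -- partial sums
  have hpartial : ∀ N : ℕ, ∑ n ∈ range N, (h n - h (n+k)) =
      (∑ n ∈ range k, h n) - ∑ i ∈ range k, h (N+i) := by
    intro N
    have h1 : ∑ n ∈ range N, h (n+k) = ∑ n ∈ range (k+N), h n - ∑ n ∈ range k, h n := by
      rw [Finset.sum_range_add]
      simp [add_comm]
    have h2 : ∑ n ∈ range (k+N), h n = ∑ n ∈ range N, h n + ∑ i ∈ range k, h (N+i) := by
      rw [add_comm k N, Finset.sum_range_add]
    rw [Finset.sum_sub_distrib, h1, h2]
    ring
  -- tendsto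
  have hh0 : Tendsto h atTop (𝓝 0) := by
    have hlin : Tendsto (fun n : ℕ => 2*(n:ℝ)+c-k) atTop atTop := by
      apply tendsto_atTop_mono (f := fun n : ℕ => (n:ℝ) + (c-k-1))
      · intro n
        have : (0:ℝ) ≤ n := Nat.cast_nonneg n
        linarith
      · exact tendsto_atTop_add_const_right _ _ tendsto_natCast_atTop_atTop
    have hx : Tendsto (fun n : ℕ => (2*(n:ℝ)+c-k)^a) atTop atTop :=
      (tendsto_pow_atTop (by omega : a ≠ 0)).comp hlin
    simp only [hh, one_div]
    exact hx.inv_tendsto_atTop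
  have htail : Tendsto (fun N : ℕ => ∑ i ∈ range k, h (N+i)) atTop (𝓝 0) := by
    have := tendsto_finset_sum (range k)
      (fun i _ => hh0.comp (tendsto_add_atTop_nat i) : ∀ i ∈ range k,
        Tendsto (fun N : ℕ => h (N+i)) atTop (𝓝 0))
    simpa using this
  have hmain : HasSum (fun n : ℕ => h n - h (n+k)) (∑ n ∈ range k, h n) := by
    rw [hasSum_iff_tendsto_nat_of_summable_norm (by simpa using hsum.abs)]
    simp only [hpartial]
    simpa using tendsto_const_nhds.sub htail
  rw [show (fun n : ℕ => 1/(2*(n:ℝ)+c-k)^a - 1/(2*(n:ℝ)+c+k)^a)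
      = fun n => h n - h (n+k) from funext hgk]
  exact hmain


lemma sum_reflect_zero (a m k c : ℕ) (hodd : Odd a)
    (hneg : ∀ n ∈ Finset.range m, 2*(((m-1-n : ℕ)):ℝ)+c-k = -(2*(n:ℝ)+c-k)) :
    ∑ n ∈ Finset.range m, 1/(2*(n:ℝ)+c-k)^a = 0 := by
  have hrefl := Finset.sum_range_reflect (fun n : ℕ => 1/(2*(n:ℝ)+c-k)^a) m
  rw [Finset.sum_congr rfl (fun n hn => by rw [hneg n hn, hodd.neg_pow, div_neg]),
    Finset.sum_neg_distrib] at hrefl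
  linarith

/-- For odd `a ∈ {1,3,5}` and `k ≥ 1`, the (term-paired) sum over positive
integers `j` of parity opposite to `k` of `1/(j-k)^a - 1/(j+k)^a` equals
`1/k^a` for odd `k` and `0` for even `k`. -/
theorem stmt7 (a k : ℕ) (ha : a = 1 ∨ a = 3 ∨ a = 5) (hk : 1 ≤ k) :
    HasSum
      (fun j : {j : ℕ // 1 ≤ j ∧ Odd (j + k)} =>
        1 / ((j : ℕ) - (k : ℝ)) ^ a - 1 / ((j : ℕ) + (k : ℝ)) ^ a)
      (if Odd k then 1 / (k : ℝ) ^ a else 0) := by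
  have hodd : Odd a := by rcases ha with rfl|rfl|rfl <;> decide
  rcases Nat.even_or_odd k with hke | hko
  · -- k even
    rw [if_neg (Nat.not_odd_iff_even.mpr hke)]
    obtain ⟨l, hl⟩ := hke
    have key := aux_hasSum a k 1 ha hk le_rfl
    push_cast at key
    have hS0 : ∑ n ∈ Finset.range k, 1/(2*(n:ℝ)+1-k)^a = 0 := by
      have h := sum_reflect_zero a k k 1 hodd ?_
      · push_cast at h ⊢; exact h
      intro n hn
      rw [Finset.mem_range] at hn
      have hc1 : ((k-1-n : ℕ):ℝ) = (k:ℝ)-1-n := by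
        have h1 : (k - 1 - n : ℕ) = k - (1 + n) := by omega
        rw [h1, Nat.cast_sub (by omega)]; push_cast; ring
      rw [hc1]; push_cast; ring
    rw [hS0] at key
    have hbij : Function.Bijective
        (fun n : ℕ => (⟨2*n+1, by omega, ⟨n+l, by omega⟩⟩ :
          {j : ℕ // 1 ≤ j ∧ Odd (j+k)})) := by
      constructor
      · intro m n hmn
        have h2 := congrArg Subtype.val hmn
        simp only at h2
        omega
      · rintro ⟨j, hj1, hj2⟩
        obtain ⟨m, hm⟩ := hj2
        exact ⟨(j-1)/2, Subtype.ext (by simp; omega)⟩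
    let e := Equiv.ofBijective _ hbij
    apply e.hasSum_iff.mp
    have hfe : ((fun j : {j : ℕ // 1 ≤ j ∧ Odd (j + k)} =>
        1 / ((j : ℕ) - (k : ℝ)) ^ a - 1 / ((j : ℕ) + (k : ℝ)) ^ a) ∘ e)
        = fun n : ℕ => 1/(2*(n:ℝ)+1-k)^a - 1/(2*(n:ℝ)+1+k)^a := by
      funext n
      show 1 / (((2*n+1 : ℕ):ℝ) - k) ^ a - 1 / (((2*n+1:ℕ):ℝ) + k) ^ a = _
      push_cast; ring_nf
    rw [hfe]
    exact key
  · -- k odd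
    rw [if_pos hko]
    obtain ⟨l, hl⟩ := hko
    have key := aux_hasSum a k 2 ha hk (by omega)
    push_cast at key
    have hS : ∑ n ∈ Finset.range k, 1/(2*(n:ℝ)+2-k)^a = 1/(k:ℝ)^a := by
      obtain ⟨m, rfl⟩ : ∃ m, k = m + 1 := ⟨k-1, by omega⟩
      rw [Finset.sum_range_succ]
      have h0 : ∑ n ∈ Finset.range m, 1/(2*(n:ℝ)+2-((m+1:ℕ):ℝ))^a = 0 := by
        have h := sum_reflect_zero a m (m+1) 2 hodd ?_
        · push_cast at h ⊢; exact h
        intro n hn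
        rw [Finset.mem_range] at hn
        have hc1 : ((m-1-n : ℕ):ℝ) = (m:ℝ)-1-n := by
          have h1 : (m - 1 - n : ℕ) = m - (1 + n) := by omega
          rw [h1, Nat.cast_sub (by omega)]; push_cast; ring
        rw [hc1]; push_cast; ring
      push_cast at h0 ⊢
      rw [h0, zero_add]
      congr 1
      ring
    rw [hS] at key
    have hbij : Function.Bijective
        (fun n : ℕ => (⟨2*n+2, by omega, ⟨n+l+1, by omega⟩⟩ :
          {j : ℕ // 1 ≤ j ∧ Odd (j+k)})) := by
      constructor
      · intro m n hmn
        have h2 := congrArg Subtype.val hmn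
        simp only at h2
        omega
      · rintro ⟨j, hj1, hj2⟩
        obtain ⟨m, hm⟩ := hj2
        exact ⟨(j-2)/2, Subtype.ext (by simp; omega)⟩
    let e := Equiv.ofBijective _ hbij
    apply e.hasSum_iff.mp
    have hfe : ((fun j : {j : ℕ // 1 ≤ j ∧ Odd (j + k)} =>
        1 / ((j : ℕ) - (k : ℝ)) ^ a - 1 / ((j : ℕ) + (k : ℝ)) ^ a) ∘ e)
        = fun n : ℕ => 1/(2*(n:ℝ)+2-k)^a - 1/(2*(n:ℝ)+2+k)^a := by
      funext n
      show 1 / (((2*n+2 : ℕ):ℝ) - k) ^ a - 1 / (((2*n+2:ℕ):ℝ) + k) ^ a = _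
      push_cast; ring_nf
    rw [hfe]
    exact key
end

section
/- For every integer k ≥ 1, the series (2⁷/π⁴) ∑_{j ≥ 1, j and k of opposite parity} k²j²/(k²-j²)⁵ converges and equals 1/(24k²) - 5/(8π²k⁴). -/
open Real Finset Filter


lemma stmt8aux_tendsto_g (i : ℕ) (hi : 1 ≤ i) :
    Tendsto (fun m : ℕ => 1 / (2 * (m : ℝ) + 1) ^ i) atTop (nhds 0) := by
  refine squeeze_zero (fun m => by positivity) (g := fun m : ℕ => 1 / ((m : ℝ) + 1))
    (fun m => ?_) tendsto_one_div_add_atTop_nhds_zero_nat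
  have hm : (0:ℝ) ≤ (m:ℝ) := Nat.cast_nonneg m
  apply one_div_le_one_div_of_le (by positivity)
  calc ((m:ℝ)+1) ≤ 2*m+1 := by linarith
  _ ≤ (2*m+1)^i := le_self_pow₀ (by linarith) (by omega)

lemma stmt8aux_summable_odd_pow (i : ℕ) (hi : 2 ≤ i) :
    Summable (fun m : ℕ => 1 / (2 * (m : ℝ) + 1) ^ i) := by
  have hinj : Function.Injective (fun n : ℕ => 2*n+1) := fun a b h => by
    simp only at h; omega
  have h := (summable_one_div_nat_pow.mpr (by omega : 1 < i)).comp_injective hinj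
  exact h.congr fun m => by simp only [Function.comp]; push_cast; ring

lemma stmt8aux_summable_diff (i K : ℕ) (hi : 1 ≤ i) :
    Summable (fun m : ℕ => 1 / (2 * ((m + K : ℕ) : ℝ) + 1) ^ i - 1 / (2 * (m : ℝ) + 1) ^ i) := by
  rcases eq_or_lt_of_le hi with h1 | h2
  · -- i = 1
    subst h1
    refine Summable.of_norm_bounded (g := fun m : ℕ => (2*K) * (1 / (2 * (m : ℝ) + 1) ^ 2))
      (((stmt8aux_summable_odd_pow 2 le_rfl)).mul_left (2*(K:ℝ))) fun m => ?_
    have hm : (0:ℝ) ≤ (m:ℝ) := Nat.cast_nonneg m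
    have hK : (0:ℝ) ≤ (K:ℝ) := Nat.cast_nonneg K
    have hx : (0:ℝ) < 2*(m:ℝ)+1 := by linarith
    have hy : (0:ℝ) < 2*((m + K : ℕ):ℝ)+1 := by positivity
    have hcast : ((m + K : ℕ):ℝ) = (m:ℝ) + K := by push_cast; ring
    rw [Real.norm_eq_abs, abs_of_nonpos ?_]
    · rw [neg_sub]
      have h1 : 1/(2*(m:ℝ)+1)^1 - 1/(2*((m + K : ℕ):ℝ)+1)^1
          = 2*K/((2*(m:ℝ)+1)*(2*((m:ℝ)+K)+1)) := by
        rw [hcast]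
        rw [div_sub_div _ _ (by linarith : (2*(m:ℝ)+1)^1 ≠ 0) (by positivity : (2*((m:ℝ)+K)+1)^1 ≠ 0)]
        ring_nf
      rw [h1]
      rw [mul_one_div]
      apply div_le_div_of_nonneg_left (by positivity) (by positivity)
      nlinarith
    · rw [hcast]
      simp only [pow_one, sub_nonpos]
      apply one_div_le_one_div_of_le (by linarith)
      linarith
  · -- 2 ≤ i
    have h3 : Summable (fun m : ℕ => 1 / (2 * ((m + K : ℕ) : ℝ) + 1) ^ i) := by
      have := (summable_nat_add_iff (f := fun m : ℕ => 1 / (2 * (m : ℝ) + 1) ^ i) K).mpr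
        (stmt8aux_summable_odd_pow i h2)
      exact this.congr fun m => by push_cast; ring_nf
    exact h3.sub (stmt8aux_summable_odd_pow i h2)

lemma stmt8aux_tele (g : ℕ → ℝ) (K : ℕ) (hs : Summable fun m => g (m + K) - g m)
    (h0 : Tendsto g atTop (nhds 0)) :
    HasSum (fun m => g (m + K) - g m) (-∑ m ∈ range K, g m) := by
  have h1 := hs.hasSum
  have h2 := h1.tendsto_sum_nat
  have key : ∀ n, ∑ m ∈ range n, (g (m + K) - g m)
      = (∑ i ∈ range K, g (n + i)) - ∑ i ∈ range K, g i := by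
    intro n
    rw [Finset.sum_sub_distrib]
    have e1 : ∑ m ∈ range n, g (m + K) = ∑ m ∈ Ico K (n + K), g m := by
      rw [Finset.sum_Ico_eq_sum_range]
      simp only [Nat.add_sub_cancel]
      exact Finset.sum_congr rfl fun m _ => by rw [Nat.add_comm]
    have e2 : ∑ i ∈ range K, g (n + i) = ∑ m ∈ Ico n (n + K), g m := by
      rw [Finset.sum_Ico_eq_sum_range]
      simp only [Nat.add_sub_cancel_left]
    have e3 : ∑ m ∈ range K, g m + ∑ m ∈ Ico K (n + K), g m = ∑ m ∈ range (n + K), g m := by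
      rw [Finset.range_eq_Ico, Finset.range_eq_Ico]
      exact Finset.sum_Ico_consecutive g (Nat.zero_le K) (Nat.le_add_left K n)
    have e4 : ∑ m ∈ range n, g m + ∑ m ∈ Ico n (n + K), g m = ∑ m ∈ range (n + K), g m := by
      rw [Finset.range_eq_Ico, Finset.range_eq_Ico]
      exact Finset.sum_Ico_consecutive g (Nat.zero_le n) (Nat.le_add_right n K)
    rw [e1, e2]
    linarith
  have h3 : Tendsto (fun n => ∑ i ∈ range K, g (n + i)) atTop (nhds 0) := by
    have hterm : ∀ i : ℕ, Tendsto (fun n => g (n + i)) atTop (nhds 0) := fun i =>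
      h0.comp (tendsto_add_atTop_nat i)
    have := tendsto_finset_sum (range K) (fun i _ => hterm i)
    simpa using this
  have h4 : Tendsto (fun n => ∑ m ∈ range n, (g (m + K) - g m)) atTop
      (nhds (-∑ i ∈ range K, g i)) := by
    simp only [key]
    have := h3.sub (tendsto_const_nhds (x := ∑ i ∈ range K, g i))
    simpa using this
  have := tendsto_nhds_unique h2 h4
  rwa [this] at h1

lemma stmt8aux_teleSum (i K : ℕ) (hi : 1 ≤ i) :
    HasSum (fun m : ℕ => 1 / (2 * ((m:ℝ) + K) + 1) ^ i - 1 / (2 * (m:ℝ) + 1) ^ i)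
      (-∑ m ∈ range K, 1 / (2 * (m:ℝ) + 1) ^ i) := by
  have hsum : Summable (fun m : ℕ => (fun m : ℕ => 1/(2*(m:ℝ)+1)^i) (m + K)
      - (fun m : ℕ => 1/(2*(m:ℝ)+1)^i) m) := by
    exact (stmt8aux_summable_diff i K hi).congr fun m => by norm_num
  have := stmt8aux_tele (fun m : ℕ => 1/(2*(m:ℝ)+1)^i) K hsum (stmt8aux_tendsto_g i hi)
  exact this.congr_fun fun m => by push_cast; ring_nf

lemma stmt8aux_hasSum_odd_pow {i : ℕ} (hi : 2 ≤ i) {T : ℝ}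
    (hT : HasSum (fun n : ℕ => 1 / (n : ℝ) ^ i) T) :
    HasSum (fun m : ℕ => 1 / (2 * (m : ℝ) + 1) ^ i) (T - T / 2 ^ i) := by
  have he : HasSum (fun n : ℕ => (fun n : ℕ => 1 / (n : ℝ) ^ i) (2 * n)) (1 / 2 ^ i * T) :=
    (hT.mul_left (1 / 2 ^ i)).congr_fun fun n => by
      push_cast
      rw [mul_pow]
      simp [one_div, mul_inv, mul_comm]
  have hsumm : Summable (fun n : ℕ => (fun n : ℕ => 1 / (n : ℝ) ^ i) (2 * n + 1)) := by
    refine (stmt8aux_summable_odd_pow i hi).congr fun m => ?_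
    push_cast; ring_nf
  have ho := hsumm.hasSum
  have htot := HasSum.even_add_odd (f := fun n : ℕ => 1 / (n : ℝ) ^ i) he ho
  have hval := hT.unique htot
  have hts : ∑' n, (fun n : ℕ => 1 / (n : ℝ) ^ i) (2 * n + 1) = T - T / 2 ^ i := by
    have h2 : (0:ℝ) < 2 ^ i := by positivity
    field_simp at hval ⊢
    linarith
  rw [hts] at ho
  exact ho.congr_fun fun m => by push_cast; ring_nf

lemma stmt8aux_sum_neg_reflect (s i : ℕ) :
    ∑ m ∈ range s, (1:ℝ) / (2 * (m:ℝ) + 1 - 2 * (s:ℝ)) ^ i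
      = (-1) ^ i * ∑ m ∈ range s, (1:ℝ) / (2 * (m:ℝ) + 1) ^ i := by
  rw [← Finset.sum_range_reflect (fun m => (1:ℝ)/(2*(m:ℝ)+1)^i) s, Finset.mul_sum]
  refine Finset.sum_congr rfl fun m hm => ?_
  have hms : m < s := Finset.mem_range.mp hm
  have hc : ((s - 1 - m : ℕ) : ℝ) = (s:ℝ) - 1 - m := by
    have h1 : (s - 1 - m : ℕ) = s - (1 + m) := by omega
    rw [h1, Nat.cast_sub (by omega)]
    push_cast; ring
  simp only [hc]
  have hy : 2*(m:ℝ)+1-2*(s:ℝ) = -(2*((s:ℝ)-1-m)+1) := by ring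
  rw [hy, neg_pow]
  rcases Nat.even_or_odd i with he | ho
  · rw [he.neg_one_pow]; ring
  · rw [ho.neg_one_pow]
    rw [neg_one_mul, div_neg]
    ring

lemma stmt8aux_sum_shift (s a i : ℕ) :
    ∑ m ∈ range s, (1:ℝ) / (2 * ((m:ℝ) + a) + 1) ^ i
      = ∑ m ∈ range (a + s), (1:ℝ) / (2 * (m:ℝ) + 1) ^ i
        - ∑ m ∈ range a, (1:ℝ) / (2 * (m:ℝ) + 1) ^ i := by
  rw [eq_sub_iff_add_eq, add_comm]
  rw [← Finset.sum_range_add_sum_Ico (fun m => (1:ℝ)/(2*(m:ℝ)+1)^i) (Nat.le_add_right a s)]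
  congr 1
  rw [Finset.sum_Ico_eq_sum_range]
  simp only [Nat.add_sub_cancel_left]
  exact Finset.sum_congr rfl fun m _ => by push_cast; ring_nf

lemma stmt8aux_D_eval (k i : ℕ) (hk : 1 ≤ k) :
    ∑ m ∈ range (k / 2), (1:ℝ) / (2 * (m:ℝ) + 1) ^ i
      = ∑ m ∈ range (k - k / 2), (1:ℝ) / (2 * (m:ℝ) + 1) ^ i
        - ((k % 2 : ℕ) : ℝ) * (1 / (k:ℝ) ^ i) := by
  rcases Nat.even_or_odd k with he | ho
  · have h0 : k % 2 = 0 := Nat.even_iff.mp he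
    have h1 : k - k / 2 = k / 2 := by omega
    rw [h1, h0]
    simp
  · have h0 : k % 2 = 1 := Nat.odd_iff.mp ho
    have h1 : k - k / 2 = k / 2 + 1 := by omega
    rw [h1, Finset.sum_range_succ, h0]
    have h2 : 2*((k/2 : ℕ):ℝ)+1 = (k:ℝ) := by
      have : 2*(k/2) + 1 = k := by omega
      exact_mod_cast congrArg (Nat.cast : ℕ → ℝ) this
    rw [h2]
    push_cast
    ring

lemma stmt8aux_decomp (K x : ℝ) (hK : K ≠ 0) (hu : x - K ≠ 0) (hv : x + K ≠ 0) :
    K^2*x^2/(K^2-x^2)^5 =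
      -5/(256*K^5) * (1/(x+K)^1 - 1/(x-K)^1) +
      (-5/(256*K^4) * (1/(x-K)^2 + 1/(x+K)^2) +
      (-1/(128*K^3) * (1/(x+K)^3 - 1/(x-K)^3) +
      (1/(64*K^2) * (1/(x-K)^4 + 1/(x+K)^4) +
      1/(32*K) * (1/(x+K)^5 - 1/(x-K)^5)))) := by
  have h : K^2 - x^2 = -((x-K)*(x+K)) := by ring
  rw [h]
  field_simp
  ring

/-- The second-order perturbation coefficient of the `k`-th eigenvalue:
`(2⁷/π⁴) ∑_{j ≥ 1, parity opposite to k} k²j²/(k²-j²)⁵ = 1/(24k²) - 5/(8π²k⁴)`. -/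
theorem stmt8 (k : ℕ) (hk : 1 ≤ k) :
    HasSum
      (fun j : {j : ℕ // 1 ≤ j ∧ Odd (j + k)} =>
        2 ^ 7 / Real.pi ^ 4 *
          ((k : ℝ) ^ 2 * ((j : ℕ) : ℝ) ^ 2 / ((k : ℝ) ^ 2 - ((j : ℕ) : ℝ) ^ 2) ^ 5))
      (1 / (24 * (k : ℝ) ^ 2) - 5 / (8 * Real.pi ^ 2 * (k : ℝ) ^ 4)) := by
  have hK0 : (k:ℝ) ≠ 0 := Nat.cast_ne_zero.mpr (by omega)
  have hπ : Real.pi ≠ 0 := Real.pi_ne_zero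
  set s := k / 2 with hs_def
  set a := k - k / 2 with ha_def
  set e := k % 2 with he_def
  have hsa : a + s = k := by omega
  have har : (a:ℝ) = (k:ℝ) - s := by
    have h := congrArg (Nat.cast : ℕ → ℝ) hsa
    push_cast at h; linarith
  have hKr : (k:ℝ) = 2*(s:ℝ) + (e:ℝ) := by
    have h : k = 2*s + e := by omega
    rw [h]; push_cast; ring
  let E : ℕ ≃ {j : ℕ // 1 ≤ j ∧ Odd (j + k)} :=
    { toFun := fun m => ⟨2*m+1+e, ⟨by omega, by rw [Nat.odd_iff]; omega⟩⟩
      invFun := fun j => (j.1 - 1 - e) / 2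
      left_inv := fun m => by simp only; omega
      right_inv := fun j => by
        obtain ⟨j, hj1, hj2⟩ := j
        rw [Nat.odd_iff] at hj2
        exact Subtype.ext (by simp only; omega) }
  rw [← Equiv.hasSum_iff E]
  simp only [Function.comp_def, E, Equiv.coe_fn_mk]
  have base2 : HasSum (fun m : ℕ => 1/(2*(m:ℝ)+1)^2) (π^2/8) := by
    have h := stmt8aux_hasSum_odd_pow le_rfl hasSum_zeta_two
    convert h using 1
    ring
  have base4 : HasSum (fun m : ℕ => 1/(2*(m:ℝ)+1)^4) (π^4/96) := by
    have h := stmt8aux_hasSum_odd_pow (by norm_num) hasSum_zeta_four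
    convert h using 1
    ring
  have h2v : HasSum (fun m : ℕ => 1/(2*((m:ℝ)+(a:ℝ))+1)^2)
      (π^2/8 - ∑ m ∈ range a, 1/(2*(m:ℝ)+1)^2) :=
    ((hasSum_nat_add_iff' (f := fun m : ℕ => 1/(2*(m:ℝ)+1)^2) a).mpr base2).congr_fun
      (fun m => by push_cast; ring)
  have h4v : HasSum (fun m : ℕ => 1/(2*((m:ℝ)+(a:ℝ))+1)^4)
      (π^4/96 - ∑ m ∈ range a, 1/(2*(m:ℝ)+1)^4) :=
    ((hasSum_nat_add_iff' (f := fun m : ℕ => 1/(2*(m:ℝ)+1)^4) a).mpr base4).congr_fun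
      (fun m => by push_cast; ring)
  have h2u : HasSum (fun m : ℕ => 1/(2*(m:ℝ)+1-2*(s:ℝ))^2)
      (π^2/8 + ∑ m ∈ range s, 1/(2*(m:ℝ)+1-2*(s:ℝ))^2) := by
    refine (hasSum_nat_add_iff (f := fun m : ℕ => 1/(2*(m:ℝ)+1-2*(s:ℝ))^2) s).mp ?_
    exact base2.congr_fun (fun m => by push_cast; ring)
  have h4u : HasSum (fun m : ℕ => 1/(2*(m:ℝ)+1-2*(s:ℝ))^4)
      (π^4/96 + ∑ m ∈ range s, 1/(2*(m:ℝ)+1-2*(s:ℝ))^4) := by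
    refine (hasSum_nat_add_iff (f := fun m : ℕ => 1/(2*(m:ℝ)+1-2*(s:ℝ))^4) s).mp ?_
    exact base4.congr_fun (fun m => by push_cast; ring)
  have hodd : ∀ i : ℕ, 1 ≤ i →
      HasSum (fun m : ℕ => 1/(2*((m:ℝ)+(a:ℝ))+1)^i - 1/(2*(m:ℝ)+1-2*(s:ℝ))^i)
        ((-∑ m ∈ range k, 1/(2*(m:ℝ)+1)^i)
          + ∑ m ∈ range s, (1/(2*((m:ℝ)+(a:ℝ))+1)^i - 1/(2*(m:ℝ)+1-2*(s:ℝ))^i)) := by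
    intro i hi
    refine (hasSum_nat_add_iff
      (f := fun m : ℕ => 1/(2*((m:ℝ)+(a:ℝ))+1)^i - 1/(2*(m:ℝ)+1-2*(s:ℝ))^i) s).mp ?_
    refine (stmt8aux_teleSum i k hi).congr_fun fun m => ?_
    have hcast : ((m + s : ℕ):ℝ) = (m:ℝ) + s := by push_cast; ring
    simp only [hcast, har]
    ring
  have HS := (((hodd 1 le_rfl).mul_left (-5/(256*(k:ℝ)^5))).add
    (((h2u.add h2v).mul_left (-5/(256*(k:ℝ)^4))).add
    (((hodd 3 (by norm_num)).mul_left (-1/(128*(k:ℝ)^3))).add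
    (((h4u.add h4v).mul_left (1/(64*(k:ℝ)^2))).add
    ((hodd 5 (by norm_num)).mul_left (1/(32*(k:ℝ)))))))).mul_left (2^7/Real.pi^4)
  convert HS using 1
  · rfl
  · funext m
    have hx : ((2*m+1+e : ℕ):ℝ) = 2*(m:ℝ)+1+(e:ℝ) := by push_cast; ring
    rw [hx]
    have hu0 : 2*(m:ℝ)+1-2*(s:ℝ) ≠ 0 := by
      intro h
      have h2 : ((2*m+1 : ℕ):ℝ) = ((2*s : ℕ):ℝ) := by push_cast; linarith
      have h3 : 2*m+1 = 2*s := Nat.cast_injective h2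
      omega
    have hm : (0:ℝ) ≤ (m:ℝ) := Nat.cast_nonneg m
    have ha' : (0:ℝ) ≤ (a:ℝ) := Nat.cast_nonneg a
    have hv0 : 2*((m:ℝ)+(a:ℝ))+1 ≠ 0 := by positivity
    have e1 : 2*((m:ℝ)+(a:ℝ))+1 = (2*(m:ℝ)+1+(e:ℝ)) + (k:ℝ) := by
      rw [har, hKr]; ring
    have e2 : 2*(m:ℝ)+1-2*(s:ℝ) = (2*(m:ℝ)+1+(e:ℝ)) - (k:ℝ) := by
      rw [hKr]; ring
    congr 1
    rw [e2] at hu0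
    rw [e1] at hv0
    rw [e1, e2]
    exact stmt8aux_decomp (k:ℝ) (2*(m:ℝ)+1+(e:ℝ)) hK0 hu0 hv0
  · rw [Finset.sum_sub_distrib, Finset.sum_sub_distrib, Finset.sum_sub_distrib]
    rw [stmt8aux_sum_shift s a 1, stmt8aux_sum_shift s a 3, stmt8aux_sum_shift s a 5, hsa]
    rw [stmt8aux_sum_neg_reflect s 1, stmt8aux_sum_neg_reflect s 2, stmt8aux_sum_neg_reflect s 3,
      stmt8aux_sum_neg_reflect s 4, stmt8aux_sum_neg_reflect s 5]
    rw [hs_def, ha_def]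
    rw [stmt8aux_D_eval k 1 hk, stmt8aux_D_eval k 2 hk, stmt8aux_D_eval k 3 hk, stmt8aux_D_eval k 4 hk, stmt8aux_D_eval k 5 hk]
    field_simp
    ring
end

section
/- Let N ∈ ℕ*, C* > 0, and set σ₀ = π/(4√C*). Suppose real numbers (λ_{k,σ})_{k≥1} satisfy |λ_{k,σ} - k²π²/2| ≤ C*σ²/k for all k and all |σ| < σ₀. Then for any |σ| < σ₀, any j₁, k₁ ∈ {1,…,N} and any j₂, k₂ ∈ ℕ* with j₁ ≠ j₂, k₁ ≠ k₂, j₂ ≠ k₂ and max{j₂, k₂} > (N²+1)/2, the equality λ_{k₁,σ} - λ_{k₂,σ} = λ_{j₁,σ} - λ_{j₂,σ} fails. -/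
open Real

set_option maxHeartbeats 1000000 in
/-- With `σ₀ = π/(4√C*)` and perturbed eigenvalues satisfying
`|λ_{k,σ} - k²π²/2| ≤ C*σ²/k`, no resonance relation
`λ_{k₁,σ} - λ_{k₂,σ} = λ_{j₁,σ} - λ_{j₂,σ}` can hold when
`j₁, k₁ ≤ N`, `j₁ ≠ j₂`, `k₁ ≠ k₂`, `j₂ ≠ k₂` and `max{j₂,k₂} > (N²+1)/2`. -/
theorem stmt11 (N : ℕ) (hN : 1 ≤ N) (Cs : ℝ) (hCs : 0 < Cs) (lam : ℕ → ℝ → ℝ)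
    (hlam : ∀ k : ℕ, 1 ≤ k → ∀ σ : ℝ, |σ| < Real.pi / (4 * Real.sqrt Cs) →
      |lam k σ - (k : ℝ) ^ 2 * Real.pi ^ 2 / 2| ≤ Cs * σ ^ 2 / k)
    (σ : ℝ) (hσ : |σ| < Real.pi / (4 * Real.sqrt Cs))
    (j₁ k₁ j₂ k₂ : ℕ) (hj₁ : j₁ ∈ Finset.Icc 1 N) (hk₁ : k₁ ∈ Finset.Icc 1 N)
    (hj₂ : 1 ≤ j₂) (hk₂ : 1 ≤ k₂)
    (hjj : j₁ ≠ j₂) (hkk : k₁ ≠ k₂) (hjk : j₂ ≠ k₂)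
    (hmax : ((N : ℝ) ^ 2 + 1) / 2 < max j₂ k₂) :
    lam k₁ σ - lam k₂ σ ≠ lam j₁ σ - lam j₂ σ := by
  intro heq
  obtain ⟨hj₁1, hj₁N⟩ := Finset.mem_Icc.mp hj₁
  obtain ⟨hk₁1, hk₁N⟩ := Finset.mem_Icc.mp hk₁
  have hπ := Real.pi_pos
  have hsq : 0 < Real.sqrt Cs := Real.sqrt_pos.mpr hCs
  -- bound on Cs σ²
  have hσ2 : Cs * σ ^ 2 < Real.pi ^ 2 / 16 := by
    have h1 : |σ| ^ 2 < (Real.pi / (4 * Real.sqrt Cs)) ^ 2 := by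
      apply pow_lt_pow_left₀ hσ (abs_nonneg σ)
      norm_num
    rw [sq_abs] at h1
    have h2 : (Real.pi / (4 * Real.sqrt Cs)) ^ 2 = Real.pi ^ 2 / (16 * Cs) := by
      rw [div_pow, mul_pow, Real.sq_sqrt hCs.le]
      norm_num
    rw [h2] at h1
    have h3 : σ ^ 2 * Cs < Real.pi ^ 2 / (16 * Cs) * Cs := by
      exact mul_lt_mul_of_pos_right h1 hCs
    have : Real.pi ^ 2 / (16 * Cs) * Cs = Real.pi ^ 2 / 16 := by
      field_simp
    nlinarith
  -- error bounds
  have key : ∀ k : ℕ, 1 ≤ k → |lam k σ - (k : ℝ) ^ 2 * Real.pi ^ 2 / 2| ≤ Cs * σ ^ 2 := by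
    intro k hk
    refine (hlam k hk σ hσ).trans ?_
    have hk' : (1 : ℝ) ≤ (k : ℝ) := by exact_mod_cast hk
    exact div_le_self (by positivity) hk'
  have e1 := abs_le.mp (key k₁ hk₁1)
  have e2 := abs_le.mp (key k₂ hk₂)
  have e3 := abs_le.mp (key j₁ hj₁1)
  have e4 := abs_le.mp (key j₂ hj₂)
  -- integer identity
  have hcast : (((k₁ : ℤ) ^ 2 - k₂ ^ 2 - j₁ ^ 2 + j₂ ^ 2 : ℤ) : ℝ) * (Real.pi ^ 2 / 2)
      = (lam j₁ σ - (j₁ : ℝ) ^ 2 * Real.pi ^ 2 / 2)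
        - (lam j₂ σ - (j₂ : ℝ) ^ 2 * Real.pi ^ 2 / 2)
        - (lam k₁ σ - (k₁ : ℝ) ^ 2 * Real.pi ^ 2 / 2)
        + (lam k₂ σ - (k₂ : ℝ) ^ 2 * Real.pi ^ 2 / 2) := by
    push_cast
    linear_combination heq
  have habs : |(((k₁ : ℤ) ^ 2 - k₂ ^ 2 - j₁ ^ 2 + j₂ ^ 2 : ℤ) : ℝ)| * (Real.pi ^ 2 / 2)
      < 1 * (Real.pi ^ 2 / 2) := by
    rcases abs_cases (((k₁ : ℤ) ^ 2 - k₂ ^ 2 - j₁ ^ 2 + j₂ ^ 2 : ℤ) : ℝ) with ⟨h, _⟩ | ⟨h, _⟩ <;>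
      rw [h] <;> nlinarith
  have hnr : |(((k₁ : ℤ) ^ 2 - k₂ ^ 2 - j₁ ^ 2 + j₂ ^ 2 : ℤ) : ℝ)| < 1 :=
    lt_of_mul_lt_mul_right habs (by positivity)
  have hn0 : (k₁ : ℤ) ^ 2 - k₂ ^ 2 - j₁ ^ 2 + j₂ ^ 2 = 0 := by
    have h : |(k₁ : ℤ) ^ 2 - k₂ ^ 2 - j₁ ^ 2 + j₂ ^ 2| < 1 := by exact_mod_cast hnr
    rcases abs_lt.mp h with ⟨ha, hb⟩
    omega
  have heqZ : (k₁ : ℤ) ^ 2 + j₂ ^ 2 = j₁ ^ 2 + k₂ ^ 2 := by linear_combination hn0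
  have hmaxN : N ^ 2 + 1 < 2 * max j₂ k₂ := by
    have h1 : ((N : ℝ) ^ 2 + 1) < 2 * ((max j₂ k₂ : ℕ) : ℝ) := by linarith
    exact_mod_cast h1
  have hj₁1' : (1 : ℤ) ≤ j₁ := by exact_mod_cast hj₁1
  have hk₁1' : (1 : ℤ) ≤ k₁ := by exact_mod_cast hk₁1
  have hj₁N' : (j₁ : ℤ) ≤ N := by exact_mod_cast hj₁N
  have hk₁N' : (k₁ : ℤ) ≤ N := by exact_mod_cast hk₁N
  have hj₂' : (1 : ℤ) ≤ j₂ := by exact_mod_cast hj₂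
  have hk₂' : (1 : ℤ) ≤ k₂ := by exact_mod_cast hk₂
  rcases hjk.lt_or_gt with hlt | hlt
  · -- j₂ < k₂ : max = k₂
    have hmk : (N : ℤ) ^ 2 + 2 ≤ 2 * k₂ := by
      rw [max_eq_right hlt.le] at hmaxN
      have : (N : ℤ) ^ 2 + 1 < 2 * k₂ := by exact_mod_cast hmaxN
      linarith
    have hlt' : (j₂ : ℤ) < k₂ := by exact_mod_cast hlt
    nlinarith [mul_nonneg (show (0:ℤ) ≤ k₂ - 1 - j₂ by linarith) (show (0:ℤ) ≤ k₂ - 1 + j₂ by linarith),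
      mul_nonneg (show (0:ℤ) ≤ N - k₁ by linarith) (show (0:ℤ) ≤ N + k₁ by linarith),
      mul_nonneg (show (0:ℤ) ≤ j₁ - 1 by linarith) (show (0:ℤ) ≤ j₁ + 1 by linarith)]
  · -- k₂ < j₂ : max = j₂
    have hmj : (N : ℤ) ^ 2 + 2 ≤ 2 * j₂ := by
      rw [max_eq_left hlt.le] at hmaxN
      have : (N : ℤ) ^ 2 + 1 < 2 * j₂ := by exact_mod_cast hmaxN
      linarith
    have hlt' : (k₂ : ℤ) < j₂ := by exact_mod_cast hlt
    nlinarith [mul_nonneg (show (0:ℤ) ≤ j₂ - 1 - k₂ by linarith) (show (0:ℤ) ≤ j₂ - 1 + k₂ by linarith),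
      mul_nonneg (show (0:ℤ) ≤ N - j₁ by linarith) (show (0:ℤ) ≤ N + j₁ by linarith),
      mul_nonneg (show (0:ℤ) ≤ k₁ - 1 by linarith) (show (0:ℤ) ≤ k₁ + 1 by linarith)]
end
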